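/- Let 0 < α < 1 and define μ_{n} for n ≥ 2 by the relations n μ_{n+1} + (n+1) μ_{n+2} + (n+2) μ_{n+3} + ... = exp(-n^α) for all n = 1,2,.... Then ln μ_n ∼ -n^α as n → ∞, i.e. (ln μ_n)/(-n^α) → 1. -/

import Mathlib

open Real Filter

/-- Key recursion: the μ's are uniquely determined. -/
lemma stmt7_key (α : ℝ) (μ : ℕ → ℝ)
    (hsum : ∀ n : ℕ, 1 ≤ n → Summable (fun j : ℕ => ((n + j : ℕ) : ℝ) * μ (n + j + 1)))
    (hrel : ∀ n : ℕ, 1 ≤ n →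
      ∑' j : ℕ, ((n + j : ℕ) : ℝ) * μ (n + j + 1) = Real.exp (-(n : ℝ) ^ α))
    (n : ℕ) (hn : 1 ≤ n) :
    (n : ℝ) * μ (n + 1) = Real.exp (-(n : ℝ) ^ α) - Real.exp (-((n : ℝ) + 1) ^ α) := by
  have h1 := hrel n hn
  have h2 := hrel (n + 1) (by omega)
  have hs := hsum n hn
  have hshift : (∑' j : ℕ, ((n + (j + 1) : ℕ) : ℝ) * μ (n + (j + 1) + 1))
      = ∑' j : ℕ, (((n + 1) + j : ℕ) : ℝ) * μ ((n + 1) + j + 1) := by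
    apply tsum_congr
    intro j
    congr 2 <;> omega
  have hzero := hs.tsum_eq_zero_add
  rw [hzero, hshift, h2] at h1
  have hc : ((n + 1 : ℕ) : ℝ) = (n : ℝ) + 1 := by push_cast; ring
  rw [hc] at h1
  simp only [Nat.add_zero] at h1
  linarith

/-- If `0 < α < 1` and the nonnegative numbers `μ n` satisfy
`n μ_{n+1} + (n+1) μ_{n+2} + ⋯ = exp (-n^α)` for all `n ≥ 1`,
then `ln μ_n ∼ -n^α` as `n → ∞`. -/
theorem stmt_7 (α : ℝ) (hα0 : 0 < α) (hα1 : α < 1) (μ : ℕ → ℝ)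
    (hμ0 : ∀ n, 0 ≤ μ n)
    (hsum : ∀ n : ℕ, 1 ≤ n → Summable (fun j : ℕ => ((n + j : ℕ) : ℝ) * μ (n + j + 1)))
    (hrel : ∀ n : ℕ, 1 ≤ n →
      ∑' j : ℕ, ((n + j : ℕ) : ℝ) * μ (n + j + 1) = Real.exp (-(n : ℝ) ^ α)) :
    Filter.Tendsto (fun n : ℕ => Real.log (μ n) / (-(n : ℝ) ^ α))
      Filter.atTop (nhds 1) := by
  rw [← Filter.tendsto_add_atTop_iff_nat 1]
  set δ : ℕ → ℝ := fun n => ((n : ℝ) + 1) ^ α - (n : ℝ) ^ α with hδdef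
  have hδpos : ∀ n : ℕ, 1 ≤ n → 0 < δ n := by
    intro n hn
    have : (n : ℝ) ^ α < ((n : ℝ) + 1) ^ α :=
      Real.rpow_lt_rpow (by positivity) (by linarith) hα0
    simpa [hδdef] using sub_pos.mpr this
  -- lower bound on δ
  have hδlow : ∀ n : ℕ, 1 ≤ n → α * ((n : ℝ) + 1) ^ (α - 1) ≤ δ n := by
    intro n hn
    set x : ℝ := (n : ℝ) with hx
    have hx0 : (0 : ℝ) ≤ x := by positivity
    have hy0 : (0 : ℝ) < x + 1 := by linarith
    have hamgm : x ^ α * (x + 1) ^ (1 - α) ≤ α * x + (1 - α) * (x + 1) :=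
      Real.geom_mean_le_arith_mean2_weighted (le_of_lt hα0) (by linarith) hx0 hy0.le
        (by ring)
    have h1 : (x + 1) ^ α * (x + 1) ^ (1 - α) = x + 1 := by
      rw [← Real.rpow_add hy0]; simp
    have h2 : (x + 1) ^ (α - 1) * (x + 1) ^ (1 - α) = 1 := by
      rw [← Real.rpow_add hy0]; simp
    have hpos : (0 : ℝ) < (x + 1) ^ (1 - α) := Real.rpow_pos_of_pos hy0 _
    have key : α * (x + 1) ^ (α - 1) * (x + 1) ^ (1 - α)
        ≤ ((x + 1) ^ α - x ^ α) * (x + 1) ^ (1 - α) := by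
      rw [sub_mul, h1, mul_assoc, h2, mul_one]
      nlinarith
    have := (mul_le_mul_iff_of_pos_right hpos).mp key
    simpa [hδdef, hx] using this
  -- upper bound on δ
  have hδup : ∀ n : ℕ, 1 ≤ n → δ n ≤ 1 := by
    intro n hn
    have hx1 : (1 : ℝ) ≤ (n : ℝ) := by exact_mod_cast hn
    set x : ℝ := (n : ℝ) with hx
    have hx0 : (0 : ℝ) < x := by linarith
    have hy0 : (0 : ℝ) < x + 1 := by linarith
    have hamgm : (x + 1) ^ α * x ^ (1 - α) ≤ α * (x + 1) + (1 - α) * x :=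
      Real.geom_mean_le_arith_mean2_weighted (le_of_lt hα0) (by linarith) hy0.le hx0.le
        (by ring)
    have h1 : x ^ α * x ^ (1 - α) = x := by rw [← Real.rpow_add hx0]; simp
    have key : ((x + 1) ^ α - x ^ α) * x ^ (1 - α) ≤ α := by
      rw [sub_mul, h1]; nlinarith
    have hone : (1 : ℝ) ≤ x ^ (1 - α) := Real.one_le_rpow hx1 (by linarith)
    have hδn := hδpos n hn
    have : δ n ≤ δ n * x ^ (1 - α) := le_mul_of_one_le_right hδn.le hone
    have : δ n ≤ α := le_trans this key
    linarith
  -- the main decomposition; A + B + C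
  set A : ℕ → ℝ := fun n => (n : ℝ) ^ α / ((n : ℝ) + 1) ^ α with hA
  set B : ℕ → ℝ := fun n => Real.log (n : ℝ) / ((n : ℝ) + 1) ^ α with hB
  set C : ℕ → ℝ := fun n => -Real.log (1 - Real.exp (-δ n)) / ((n : ℝ) + 1) ^ α with hC
  -- tendsto of the three pieces
  have htendA : Tendsto A atTop (nhds 1) := by
    have hq : Tendsto (fun n : ℕ => (n : ℝ) / ((n : ℝ) + 1)) atTop (nhds 1) := by
      have := tendsto_natCast_div_add_atTop (𝕜 := ℝ) 1
      simpa using this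
    have := hq.rpow_const (p := α) (Or.inr hα0.le)
    simp only [Real.one_rpow] at this
    apply this.congr'
    filter_upwards [eventually_ge_atTop 1] with n hn
    have hx0 : (0 : ℝ) ≤ (n : ℝ) := by positivity
    have hy0 : (0 : ℝ) < (n : ℝ) + 1 := by linarith
    rw [Real.div_rpow hx0 hy0.le]
  have hlog : Tendsto (fun n : ℕ => Real.log ((n : ℝ) + 1) / ((n : ℝ) + 1) ^ α)
      atTop (nhds 0) := by
    have h1 : Tendsto (fun x : ℝ => Real.log x / x ^ α) atTop (nhds 0) :=
      (isLittleO_log_rpow_atTop hα0).tendsto_div_nhds_zero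
    have h2 : Tendsto (fun n : ℕ => (n : ℝ) + 1) atTop atTop :=
      tendsto_atTop_add_const_right _ 1 tendsto_natCast_atTop_atTop
    exact h1.comp h2
  have hinv : Tendsto (fun n : ℕ => (((n : ℝ) + 1) ^ α)⁻¹) atTop (nhds 0) := by
    have h2 : Tendsto (fun n : ℕ => (n : ℝ) + 1) atTop atTop :=
      tendsto_atTop_add_const_right _ 1 tendsto_natCast_atTop_atTop
    exact ((tendsto_rpow_atTop hα0).comp h2).inv_tendsto_atTop
  have htendB : Tendsto B atTop (nhds 0) := by
    apply tendsto_of_tendsto_of_tendsto_of_le_of_le' tendsto_const_nhds hlog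
    · filter_upwards [eventually_ge_atTop 1] with n hn
      have hx1 : (1 : ℝ) ≤ (n : ℝ) := by exact_mod_cast hn
      have : (0 : ℝ) ≤ Real.log (n : ℝ) := Real.log_nonneg hx1
      positivity
    · filter_upwards [eventually_ge_atTop 1] with n hn
      have hx0 : (0 : ℝ) < (n : ℝ) := by exact_mod_cast hn
      have hy0' : (0 : ℝ) < ((n : ℝ) + 1) ^ α := by positivity
      exact (div_le_div_iff_of_pos_right hy0').mpr (Real.log_le_log hx0 (by linarith))
  have htendC : Tendsto C atTop (nhds 0) := by
    have hub : Tendsto (fun n : ℕ => (1 - Real.log α) * (((n : ℝ) + 1) ^ α)⁻¹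
        + (1 - α) * (Real.log ((n : ℝ) + 1) / ((n : ℝ) + 1) ^ α)) atTop (nhds 0) := by
      have := (hinv.const_mul (1 - Real.log α)).add (hlog.const_mul (1 - α))
      simpa using this
    apply tendsto_of_tendsto_of_tendsto_of_le_of_le' tendsto_const_nhds hub
    · filter_upwards [eventually_ge_atTop 1] with n hn
      have hδn := hδpos n hn
      have hlt1 : Real.exp (-δ n) < 1 := Real.exp_lt_one_iff.mpr (by linarith)
      have h0 : (0 : ℝ) < 1 - Real.exp (-δ n) := by linarith
      have hle1 : 1 - Real.exp (-δ n) ≤ 1 := by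
        have := Real.exp_pos (-δ n); linarith
      have : Real.log (1 - Real.exp (-δ n)) ≤ 0 := Real.log_nonpos h0.le hle1
      have hy0 : (0 : ℝ) < ((n : ℝ) + 1) ^ α := by positivity
      have : (0:ℝ) ≤ -Real.log (1 - Real.exp (-δ n)) := by linarith
      positivity
    · filter_upwards [eventually_ge_atTop 1] with n hn
      have hδn := hδpos n hn
      have hδ1 := hδup n hn
      have hδl := hδlow n hn
      have hy0 : (0 : ℝ) < (n : ℝ) + 1 := by positivity
      have hy0' : (0 : ℝ) < ((n : ℝ) + 1) ^ α := by positivity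
      -- 1 - exp(-δ) ≥ δ exp(-δ)
      have hexp : δ n + 1 ≤ Real.exp (δ n) := Real.add_one_le_exp _
      have hge : δ n * Real.exp (-δ n) ≤ 1 - Real.exp (-δ n) := by
        have hpos := Real.exp_pos (-δ n)
        have : (δ n + 1) * Real.exp (-δ n) ≤ Real.exp (δ n) * Real.exp (-δ n) :=
          mul_le_mul_of_nonneg_right hexp hpos.le
        rw [← Real.exp_add] at this
        simp at this
        nlinarith
      have hlog1 : Real.log (δ n * Real.exp (-δ n)) ≤ Real.log (1 - Real.exp (-δ n)) :=
        Real.log_le_log (by positivity) hge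
      rw [Real.log_mul hδn.ne' (Real.exp_ne_zero _), Real.log_exp] at hlog1
      -- log δ ≥ log α + (α-1) log (n+1)
      have hlogδ : Real.log α + (α - 1) * Real.log ((n : ℝ) + 1) ≤ Real.log (δ n) := by
        have h1 : Real.log (α * ((n : ℝ) + 1) ^ (α - 1)) ≤ Real.log (δ n) :=
          Real.log_le_log (by positivity) hδl
        rwa [Real.log_mul hα0.ne' (Real.rpow_pos_of_pos hy0 _).ne',
          Real.log_rpow hy0] at h1
      have hnum : -Real.log (1 - Real.exp (-δ n))
          ≤ (1 - Real.log α) + (1 - α) * Real.log ((n : ℝ) + 1) := by nlinarith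
      have : C n ≤ ((1 - Real.log α) + (1 - α) * Real.log ((n : ℝ) + 1)) / ((n : ℝ) + 1) ^ α :=
        (div_le_div_iff_of_pos_right hy0').mpr hnum
      calc C n ≤ ((1 - Real.log α) + (1 - α) * Real.log ((n : ℝ) + 1)) / ((n : ℝ) + 1) ^ α := this
        _ = (1 - Real.log α) * (((n : ℝ) + 1) ^ α)⁻¹
            + (1 - α) * (Real.log ((n : ℝ) + 1) / ((n : ℝ) + 1) ^ α) := by ring
  -- combine
  have htend : Tendsto (fun n : ℕ => A n + B n + C n) atTop (nhds 1) := by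
    have := (htendA.add htendB).add htendC
    simpa using this
  apply htend.congr'
  filter_upwards [eventually_ge_atTop 1] with n hn
  -- now the identification with log μ(n+1) / (-(n+1)^α)
  have hx1 : (1 : ℝ) ≤ (n : ℝ) := by exact_mod_cast hn
  have hx0 : (0 : ℝ) < (n : ℝ) := by linarith
  have hy0 : (0 : ℝ) < (n : ℝ) + 1 := by linarith
  have hy0' : (0 : ℝ) < ((n : ℝ) + 1) ^ α := by positivity
  have hδn := hδpos n hn
  have hlt1 : Real.exp (-δ n) < 1 := Real.exp_lt_one_iff.mpr (by linarith)
  have h1me : (0 : ℝ) < 1 - Real.exp (-δ n) := by linarith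
  have hkey := stmt7_key α μ hsum hrel n hn
  have hμn : μ (n + 1) = (Real.exp (-(n : ℝ) ^ α) - Real.exp (-((n : ℝ) + 1) ^ α)) / (n : ℝ) := by
    field_simp
    linarith [hkey]
  have hdiff : Real.exp (-(n : ℝ) ^ α) - Real.exp (-((n : ℝ) + 1) ^ α)
      = Real.exp (-(n : ℝ) ^ α) * (1 - Real.exp (-δ n)) := by
    rw [mul_sub, mul_one, ← Real.exp_add]
    simp only [hδdef]
    ring_nf
  have hlogμ : Real.log (μ (n + 1))
      = -(n : ℝ) ^ α + Real.log (1 - Real.exp (-δ n)) - Real.log (n : ℝ) := by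
    rw [hμn, hdiff, Real.log_div (by positivity) hx0.ne', Real.log_mul
      (Real.exp_ne_zero _) h1me.ne', Real.log_exp]
  show A n + B n + C n = Real.log (μ (n + 1)) / (-(((n+1 : ℕ)) : ℝ) ^ α)
  have hcast : (((n + 1 : ℕ)) : ℝ) = (n : ℝ) + 1 := by push_cast; ring
  rw [hcast, hlogμ, hA, hB, hC]
  rw [div_neg, ← neg_div, ← add_div, ← add_div]
  congr 1
  ring
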